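/- Let (v_k)_{k∈ℕ} be a sequence of pairwise distinct vectors in ℂⁿ with ‖v_k‖ ≤ ak + b for constants a > 0, b ≥ 0, and let Φ be an n×n complex matrix such that every Φ-orbit {Φᵏw : k ∈ ℕ} is either finite or satisfies ‖Φᵏw‖ ≥ c·hᵏ − d for constants h > 1, c > 0, d ≥ 0 independent of w in a given finite set. Then no finite union of Φ-orbits of members of the sequence can contain the whole set {v_k : k ∈ ℕ}. -/

import Mathlib

set_option maxHeartbeats 1600000 in
theorem no_finite_orbit_cover {n : ℕ} (Φ : Matrix (Fin n) (Fin n) ℂ)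
    (v : ℕ → (Fin n → ℂ)) (hv : Function.Injective v)
    (a b : ℝ) (ha : 0 < a) (hb : 0 ≤ b) (hgrowth : ∀ k : ℕ, ‖v k‖ ≤ a * k + b)
    (s : Finset ℕ)
    (horb : ∃ h c d : ℝ, 1 < h ∧ 0 < c ∧ 0 ≤ d ∧
      ∀ i ∈ s, ({w : Fin n → ℂ | ∃ k : ℕ, w = (Φ^k).mulVec (v i)}.Finite ∨
        ∀ k : ℕ, c * h^k - d ≤ ‖(Φ^k).mulVec (v i)‖)) :
    ¬ ({x : Fin n → ℂ | ∃ k : ℕ, x = v k} ⊆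
        ⋃ i ∈ s, {w : Fin n → ℂ | ∃ k : ℕ, w = (Φ^k).mulVec (v i)}) := by
  classical
  intro hcover
  obtain ⟨h, c, d, hh, hc, hd, horb'⟩ := horb
  set O : ℕ → Set (Fin n → ℂ) := fun i => {w | ∃ k : ℕ, w = (Φ^k).mulVec (v i)} with hO
  have hvs : ∀ k : ℕ, ∃ i ∈ s, v k ∈ O i := by
    intro k
    have hk : v k ∈ ⋃ i ∈ s, O i := hcover ⟨k, rfl⟩
    simpa using hk
  obtain ⟨i0, hi0, -⟩ := hvs 0
  have hscard : 0 < s.card := Finset.card_pos.mpr ⟨i0, hi0⟩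
  set B : ℕ := s.sup (fun i => if hf : (O i).Finite then hf.toFinset.card else 0) with hB
  set e : ℝ := h - 1 with he
  have hepos : 0 < e := by simp only [he]; linarith
  obtain ⟨m, hm⟩ := exists_nat_ge (max (B : ℝ) ((2*a*s.card + b + d + 1)/(c*e^2)) + 1)
  have hmB : (B : ℝ) + 1 ≤ m := le_trans (by simp [le_max_left]) hm
  have hBm : B < m := by exact_mod_cast (by linarith : (B:ℝ) < m)
  have hm1 : (1:ℝ) ≤ m := by
    have h0 : (0:ℝ) ≤ B := by positivity
    linarith
  have hmq : (2*a*s.card + b + d + 1)/(c*e^2) ≤ m := by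
    have := le_max_right (B:ℝ) ((2*a*s.card + b + d + 1)/(c*e^2))
    linarith
  have hce2 : 0 < c * e^2 := by positivity
  have hmlin : 2*a*s.card + b + d + 1 ≤ c*e^2*(m:ℝ) := by
    rw [div_le_iff₀ hce2] at hmq
    linarith
  set T : ℕ := 2*m with hT
  set N : ℕ := s.card * T with hN
  set K : ℕ → Finset ℕ := fun i => (Finset.range (N+1)).filter (fun k => v k ∈ O i) with hK
  have hsub : Finset.range (N+1) ⊆ s.biUnion K := by
    intro k hk
    obtain ⟨i, hi, hki⟩ := hvs k
    exact Finset.mem_biUnion.mpr ⟨i, hi, Finset.mem_filter.mpr ⟨hk, hki⟩⟩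
  have hcount : N + 1 ≤ ∑ i ∈ s, (K i).card := by
    calc N + 1 = (Finset.range (N+1)).card := by simp
    _ ≤ (s.biUnion K).card := Finset.card_le_card hsub
    _ ≤ ∑ i ∈ s, (K i).card := Finset.card_biUnion_le
  obtain ⟨i, hi, hKi⟩ : ∃ i ∈ s, T + 1 ≤ (K i).card := by
    by_contra hcon
    push_neg at hcon
    have hle : ∑ i ∈ s, (K i).card ≤ s.card * T := by
      calc ∑ i ∈ s, (K i).card ≤ ∑ _i ∈ s, T :=
            Finset.sum_le_sum (fun i hi => Nat.lt_succ_iff.mp (hcon i hi))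
      _ = s.card * T := by rw [Finset.sum_const, smul_eq_mul]
    omega
  rcases horb' i hi with hf | hg
  · -- finite orbit case
    have h1 : (K i).card ≤ hf.toFinset.card := by
      apply Finset.card_le_card_of_injOn v
      · intro k hk
        rw [Finset.mem_coe, Set.Finite.mem_toFinset]
        exact (Finset.mem_filter.mp hk).2
      · exact fun x _ y _ hxy => hv hxy
    have h2 : (if hf' : (O i).Finite then hf'.toFinset.card else 0) ≤ B :=
      Finset.le_sup (f := fun i => if hf' : (O i).Finite then hf'.toFinset.card else 0) hi
    rw [dif_pos hf] at h2
    omega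
  · -- growing orbit case
    set w : ℕ → ℕ := fun k => if hk : v k ∈ O i then hk.choose else 0 with hw
    have hwspec : ∀ k ∈ K i, v k = (Φ ^ (w k)).mulVec (v i) := by
      intro k hk
      have hki : v k ∈ O i := (Finset.mem_filter.mp hk).2
      simp only [hw, dif_pos hki]
      exact hki.choose_spec
    have hinj : Set.InjOn w (K i) := by
      intro x hx y hy hxy
      apply hv
      rw [hwspec x hx, hwspec y hy, hxy]
    set J := (K i).image w with hJ
    have hJcard : J.card = (K i).card := Finset.card_image_of_injOn hinj
    have hJne : J.Nonempty := by
      rw [← Finset.card_pos, hJcard]; omega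
    set M := J.max' hJne with hM
    obtain ⟨k, hkK, hkM⟩ := Finset.mem_image.mp (J.max'_mem hJne)
    have hTM : T ≤ M := by
      have hsubJ : J ⊆ Finset.range (M+1) := by
        intro x hx
        exact Finset.mem_range.mpr (Nat.lt_succ_of_le (J.le_max' x hx))
      have hcard := Finset.card_le_card hsubJ
      rw [hJcard, Finset.card_range] at hcard
      omega
    have h1 : c * h ^ M - d ≤ ‖v k‖ := by
      rw [hwspec k hkK, hM.trans hkM.symm]
      exact hg (w k)
    have h2 : ‖v k‖ ≤ a * N + b := by
      have hkN : (k:ℝ) ≤ N := by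
        have hkr := Finset.mem_range.mp (Finset.mem_filter.mp hkK).1
        exact_mod_cast Nat.lt_succ_iff.mp hkr
      have := hgrowth k
      nlinarith
    have hbern : (m:ℝ) * e ≤ h ^ m := by
      have hb1 := one_add_mul_le_pow (by linarith : (-2:ℝ) ≤ e) m
      have h1e : 1 + e = h := by simp [he]
      rw [h1e] at hb1
      linarith
    have hme : 0 ≤ (m:ℝ) * e := by positivity
    have hpow : ((m:ℝ) * e) * ((m:ℝ) * e) ≤ h ^ M := by
      calc ((m:ℝ) * e) * ((m:ℝ) * e) ≤ h ^ m * h ^ m :=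
            mul_le_mul hbern hbern hme (by positivity)
        _ = h ^ T := by rw [hT, two_mul, pow_add]
        _ ≤ h ^ M := pow_le_pow_right₀ hh.le hTM
    have hmnn : (0:ℝ) ≤ (m:ℝ) := Nat.cast_nonneg m
    have hcardnn : (0:ℝ) ≤ (s.card:ℝ) := Nat.cast_nonneg _
    have hNr : a * (N:ℝ) = 2 * a * (s.card:ℝ) * m := by
      rw [hN, hT]; push_cast; ring
    have hkey : 2*a*(s.card:ℝ)*m + b + d + 1 ≤ c * ((m:ℝ)*e) * ((m:ℝ)*e) := by
      have h6 : (2*a*s.card + b + d + 1) * m ≤ (c*e^2*(m:ℝ)) * m :=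
        mul_le_mul_of_nonneg_right hmlin hmnn
      have h8 : (b+d+1) * 1 ≤ (b+d+1) * m :=
        mul_le_mul_of_nonneg_left hm1 (by linarith)
      nlinarith
    have hfinal : c * (((m:ℝ)*e) * ((m:ℝ)*e)) ≤ c * h ^ M :=
      mul_le_mul_of_nonneg_left hpow hc.le
    have hassoc : c * ((m:ℝ)*e) * ((m:ℝ)*e) = c * (((m:ℝ)*e) * ((m:ℝ)*e)) := by ring
    clear_value B e T N K w J M
    clear hcover horb' hvs hwspec hinj hsub hcount hg hgrowth hv hw hK hB
    linarith [hfinal, hkey, h1, h2, hNr, hassoc]
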